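/- Define 𝓘_c(T,N,d) := ‖T21‖_Tr + ‖T12‖_Tr·‖T22‖_Tr + ‖N12‖_Tr + ‖d_e‖_1 with blocks as above. Suppose A = diag(A11, A22) and O = diag(O11, O22) (in the odd/even block decomposition) with ‖A11‖, ‖A22‖, ‖O11‖, ‖O22‖ ≤ 1 in operator norm and ‖A22‖_{1→1} ≤ 1 as an ℓ¹-operator, Y = diag(Y11, Y22), and d̄_e = 0. Let T' = A T O^T (blockwise this yields T'_{ij} = A_{ii} T_{ij} O_{jj}^T), N' = A N A^T + Y, d'_e = A22 d_e. Then 𝓘_c(T',N',d') ≤ 𝓘_c(T,N,d). -/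

import Mathlib

open Matrix
open scoped Matrix.Norms.L2Operator

/-- The trace norm (Schatten 1-norm) of a real matrix. -/
noncomputable def traceNorm {m n : Type*} [Fintype m] [Fintype n] [DecidableEq n]
    (A : Matrix m n ℝ) : ℝ :=
  ((Matrix.posSemidef_conjTranspose_mul_self A).1.eigenvectorUnitary.1 *
    Matrix.diagonal (((↑) : ℝ → ℝ) ∘ (√·) ∘ (Matrix.posSemidef_conjTranspose_mul_self A).1.eigenvalues) *
    (star (Matrix.posSemidef_conjTranspose_mul_self A).1.eigenvectorUnitary : Matrix n n ℝ)).trace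

/-- The operator (spectral) norm of a real matrix. -/
noncomputable def opNorm {m n : Type*} [Fintype m] [Fintype n] [DecidableEq n]
    (A : Matrix m n ℝ) : ℝ :=
  ‖LinearMap.toContinuousLinearMap (Matrix.toEuclideanLin A)‖

/-- The ℓ¹ norm on ℝ^n. -/
def l1Norm {n : Type*} [Fintype n] (d : n → ℝ) : ℝ := ∑ i, |d i|

/-- The induced ℓ¹→ℓ¹ operator norm: the maximum absolute column sum. -/
noncomputable def l1OpNorm {m n : Type*} [Fintype m] (A : Matrix m n ℝ) : ℝ :=
  ⨆ j, ∑ i, |A i j|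

/-- `𝓘_c(T,N,d) = ‖T21‖_Tr + ‖T12‖_Tr·‖T22‖_Tr + ‖N12‖_Tr + ‖d_e‖₁`, where the
blocks are taken in the odd/even splitting `ℝ^{2n} = ℝ^n ⊕ ℝ^n` and `d_e` is the
even part of `d`. -/
noncomputable def Ic (n : ℕ) (T N : Matrix (Fin n ⊕ Fin n) (Fin n ⊕ Fin n) ℝ)
    (d : Fin n ⊕ Fin n → ℝ) : ℝ :=
  traceNorm T.toBlocks₂₁ + traceNorm T.toBlocks₁₂ * traceNorm T.toBlocks₂₂ +
    traceNorm N.toBlocks₁₂ + l1Norm (fun i => d (Sum.inr i))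

section Helpers

variable {m : Type*} [Fintype m] [DecidableEq m]

/-- Square root of a real positive semidefinite matrix via its spectral decomposition. -/
noncomputable def Matrix.PosSemidef.sqrt {A : Matrix m m ℝ} (hA : A.PosSemidef) : Matrix m m ℝ :=
  (hA.1.eigenvectorUnitary : Matrix m m ℝ) * diagonal (fun i => Real.sqrt (hA.1.eigenvalues i)) *
    star (hA.1.eigenvectorUnitary : Matrix m m ℝ)

variable {m : Type*} [Fintype m] [DecidableEq m]

lemma norm_le_one_of_star_mul_self_eq_one {U : Matrix m m ℝ} (h : star U * U = 1) : ‖U‖ ≤ 1 := by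
  have h1 : ‖(1 : Matrix m m ℝ)‖ ≤ 1 := by
    have := Matrix.l2_opNorm_conjTranspose_mul_self (1 : Matrix m m ℝ)
    simp only [Matrix.conjTranspose_one, Matrix.one_mul] at this
    nlinarith [norm_nonneg (1 : Matrix m m ℝ)]
  have h2 : ‖U‖ * ‖U‖ = ‖(1 : Matrix m m ℝ)‖ := by
    rw [← Matrix.l2_opNorm_conjTranspose_mul_self U, ← Matrix.star_eq_conjTranspose, h]
  nlinarith [norm_nonneg U]

lemma sqrt_eq (M : Matrix m m ℝ) :
    (Matrix.posSemidef_conjTranspose_mul_self M).sqrt =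
      ((Matrix.posSemidef_conjTranspose_mul_self M).1.eigenvectorUnitary : Matrix m m ℝ) *
        diagonal (fun i => Real.sqrt ((Matrix.posSemidef_conjTranspose_mul_self M).1.eigenvalues i)) *
        star ((Matrix.posSemidef_conjTranspose_mul_self M).1.eigenvectorUnitary : Matrix m m ℝ) := by
  rw [Matrix.PosSemidef.sqrt]

lemma spectral (M : Matrix m m ℝ) :
    Mᴴ * M = ((Matrix.posSemidef_conjTranspose_mul_self M).1.eigenvectorUnitary : Matrix m m ℝ) *
        diagonal ((Matrix.posSemidef_conjTranspose_mul_self M).1.eigenvalues) *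
        star ((Matrix.posSemidef_conjTranspose_mul_self M).1.eigenvectorUnitary : Matrix m m ℝ) := by
  have := (Matrix.posSemidef_conjTranspose_mul_self M).1.spectral_theorem
  exact this.trans (by rw [Unitary.conjStarAlgAut_apply]; rfl)

lemma exists_polar (M : Matrix m m ℝ) :
    ∃ W : Matrix m m ℝ, ‖W‖ ≤ 1 ∧ M = W * (Matrix.posSemidef_conjTranspose_mul_self M).sqrt ∧
      Wᴴ * M = (Matrix.posSemidef_conjTranspose_mul_self M).sqrt := by
  classical
  set hC := Matrix.posSemidef_conjTranspose_mul_self M with hCdef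
  set U : Matrix m m ℝ := (hC.1.eigenvectorUnitary : Matrix m m ℝ) with hUdef
  set μ : m → ℝ := hC.1.eigenvalues with hμdef
  have hμ : ∀ i, 0 ≤ μ i := fun i => hC.eigenvalues_nonneg i
  have hU1 : star U * U = 1 := Matrix.mem_unitaryGroup_iff'.mp hC.1.eigenvectorUnitary.2
  have hU2 : U * star U = 1 := Matrix.mem_unitaryGroup_iff.mp hC.1.eigenvectorUnitary.2
  have cancel : ∀ X : Matrix m m ℝ, star U * (U * X) = X := by
    intro X; rw [← Matrix.mul_assoc, hU1, Matrix.one_mul]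
  have sandwich : ∀ f h : m → ℝ,
      (U * diagonal f * star U) * (U * diagonal h * star U) = U * diagonal (fun i => f i * h i) * star U := by
    intro f h
    simp only [Matrix.mul_assoc]
    rw [cancel (diagonal h * star U), ← Matrix.mul_assoc (diagonal f) (diagonal h) (star U),
      Matrix.diagonal_mul_diagonal]
  have hspec : Mᴴ * M = U * diagonal μ * star U := spectral M
  set g : m → ℝ := fun i => if μ i = 0 then 0 else (Real.sqrt (μ i))⁻¹ with hgdef
  set V : Matrix m m ℝ := U * diagonal g * star U with hVdef
  have hVsymm : Vᴴ = V := by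
    simp only [hVdef, Matrix.conjTranspose_mul, Matrix.conjTranspose_mul,
      Matrix.diagonal_conjTranspose, Matrix.star_eq_conjTranspose]
    simp [Matrix.mul_assoc, star_trivial]
  have hsqrt : hC.sqrt = U * diagonal (fun i => Real.sqrt (μ i)) * star U := sqrt_eq M
  have hgμ : ∀ i, g i * μ i = Real.sqrt (μ i) := by
    intro i
    by_cases h : μ i = 0
    · simp [hgdef, h]
    · have hpos : 0 < μ i := lt_of_le_of_ne (hμ i) (Ne.symm h)
      have hs : Real.sqrt (μ i) ≠ 0 := ne_of_gt (Real.sqrt_pos.mpr hpos)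
      rw [hgdef]; dsimp only; rw [if_neg h, inv_mul_eq_div, div_eq_iff hs]
      exact (Real.mul_self_sqrt (hμ i)).symm
  set p : m → ℝ := fun i => if μ i = 0 then 0 else 1 with hpdef
  have hgs : ∀ i, g i * Real.sqrt (μ i) = p i := by
    intro i
    by_cases h : μ i = 0
    · simp [hgdef, hpdef, h]
    · have hpos : 0 < μ i := lt_of_le_of_ne (hμ i) (Ne.symm h)
      have hs : Real.sqrt (μ i) ≠ 0 := ne_of_gt (Real.sqrt_pos.mpr hpos)
      simp [hgdef, hpdef, h, inv_mul_cancel₀ hs]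
  refine ⟨M * V, ?_, ?_, ?_⟩
  · -- norm bound
    have hWW : (M * V)ᴴ * (M * V) = U * diagonal (fun i => g i * (μ i * g i)) * star U := by
      calc (M * V)ᴴ * (M * V) = V * (Mᴴ * M) * V := by
            rw [Matrix.conjTranspose_mul, hVsymm]
            simp only [Matrix.mul_assoc]
        _ = (U * diagonal g * star U) * ((U * diagonal μ * star U) * (U * diagonal g * star U)) := by
            rw [hspec, hVdef]; simp only [Matrix.mul_assoc]
        _ = (U * diagonal g * star U) * (U * diagonal (fun i => μ i * g i) * star U) := by
            rw [sandwich]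
        _ = U * diagonal (fun i => g i * (μ i * g i)) * star U := sandwich _ _
    have hgμg : (fun i => g i * (μ i * g i)) = p := by
      funext i
      rw [← mul_assoc, hgμ i, mul_comm, hgs i]
    set Q : Matrix m m ℝ := U * diagonal p * star U with hQdef
    have hQ : (M * V)ᴴ * (M * V) = Q := by rw [hWW, hgμg]
    have hQsymm : Qᴴ = Q := by
      simp only [hQdef, Matrix.conjTranspose_mul, Matrix.diagonal_conjTranspose,
        Matrix.star_eq_conjTranspose]
      simp [Matrix.mul_assoc, star_trivial]
    have hpp : (fun i => p i * p i) = p := by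
      funext i
      by_cases h : μ i = 0 <;> simp [hpdef, h]
    have hQQ : Q * Q = Q := by
      rw [hQdef, sandwich, hpp]
    have hQnorm : ‖Q‖ ≤ 1 := by
      have : ‖Q‖ * ‖Q‖ = ‖Q‖ := by
        rw [← Matrix.l2_opNorm_conjTranspose_mul_self Q, hQsymm, hQQ]
      nlinarith [norm_nonneg Q]
    have : ‖M * V‖ * ‖M * V‖ = ‖Q‖ := by rw [← Matrix.l2_opNorm_conjTranspose_mul_self (M * V), hQ]
    nlinarith [norm_nonneg (M * V)]
  · -- M = W * sqrt
    have step : M * V * hC.sqrt = M * (U * diagonal p * star U) := by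
      rw [hsqrt, hVdef]
      calc M * (U * diagonal g * star U) * (U * diagonal (fun i => Real.sqrt (μ i)) * star U)
          = M * ((U * diagonal g * star U) * (U * diagonal (fun i => Real.sqrt (μ i)) * star U)) := by
            simp only [Matrix.mul_assoc]
        _ = M * (U * diagonal (fun i => g i * Real.sqrt (μ i)) * star U) := by rw [sandwich]
        _ = M * (U * diagonal p * star U) := by
            rw [show (fun i => g i * Real.sqrt (μ i)) = p from funext hgs]
    have hcolzero : M * U * diagonal p = M * U := by
      have hXX : (M * U)ᴴ * (M * U) = diagonal μ := by
        calc (M * U)ᴴ * (M * U) = star U * (Mᴴ * M) * U := by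
              rw [Matrix.conjTranspose_mul, ← Matrix.star_eq_conjTranspose U]
              simp only [Matrix.mul_assoc]
          _ = star U * (U * (diagonal μ * (star U * U))) := by
              rw [hspec]; simp only [Matrix.mul_assoc]
          _ = diagonal μ := by rw [hU1, Matrix.mul_one, cancel]
      ext i j
      rw [Matrix.mul_diagonal]
      by_cases h : μ j = 0
      · have hsum : ∑ k, ((M * U) k j) ^ 2 = μ j := by
          have := congrArg (fun X => X j j) hXX
          simpa [Matrix.mul_apply, Matrix.conjTranspose_apply, pow_two, mul_comm] using this
        have hz : (M * U) i j = 0 := by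
          have h0 : ∑ k, ((M * U) k j) ^ 2 = 0 := by rw [hsum, h]
          have := (Finset.sum_eq_zero_iff_of_nonneg (fun k _ => sq_nonneg ((M * U) k j))).mp h0
            i (Finset.mem_univ i)
          exact sq_eq_zero_iff.mp this
        simp [hpdef, h, hz]
      · simp [hpdef, h]
    rw [step, ← Matrix.mul_assoc, ← Matrix.mul_assoc, hcolzero, Matrix.mul_assoc, hU2,
      Matrix.mul_one]
  · -- Wᴴ * M = sqrt
    calc (M * V)ᴴ * M = V * (Mᴴ * M) := by
          rw [Matrix.conjTranspose_mul, hVsymm, Matrix.mul_assoc]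
      _ = (U * diagonal g * star U) * (U * diagonal μ * star U) := by rw [hspec, hVdef]
      _ = U * diagonal (fun i => g i * μ i) * star U := sandwich _ _
      _ = hC.sqrt := by
          rw [hsqrt, show (fun i => g i * μ i) = (fun i => Real.sqrt (μ i)) from funext hgμ]

lemma opNorm_eq_norm (A : Matrix m m ℝ) : opNorm A = ‖A‖ := rfl

lemma abs_entry_le_norm (A : Matrix m m ℝ) (i j : m) : |A i j| ≤ ‖A‖ := by
  have h := Matrix.l2_opNorm_mulVec A (EuclideanSpace.single j (1 : ℝ))
  rw [EuclideanSpace.norm_single, norm_one, mul_one] at h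
  set y := (EuclideanSpace.equiv m ℝ).symm (A *ᵥ (EuclideanSpace.single j (1:ℝ))) with hy
  have hyk : y i = A i j := by
    show (A *ᵥ ((EuclideanSpace.single j (1:ℝ)) : m → ℝ)) i = A i j
    have hx : ((EuclideanSpace.single j (1 : ℝ)) : m → ℝ) = Pi.single j 1 := by
      funext k
      simp [EuclideanSpace.single_apply, Pi.single_apply]
    rw [hx]
    simp
  refine le_trans ?_ h
  rw [EuclideanSpace.norm_eq]
  calc |A i j| = Real.sqrt ((A i j) ^ 2) := (Real.sqrt_sq_eq_abs _).symm
    _ ≤ Real.sqrt (∑ k, ‖y k‖ ^ 2) := by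
        apply Real.sqrt_le_sqrt
        calc (A i j) ^ 2 = ‖y i‖ ^ 2 := by rw [hyk, Real.norm_eq_abs, sq_abs]
          _ ≤ ∑ k, ‖y k‖ ^ 2 :=
              Finset.single_le_sum (f := fun k => ‖y k‖ ^ 2) (fun k _ => sq_nonneg _)
                (Finset.mem_univ i)

lemma traceNorm_eq (M : Matrix m m ℝ) :
    traceNorm M = ∑ i, Real.sqrt ((Matrix.posSemidef_conjTranspose_mul_self M).1.eigenvalues i) := by
  have hU1 : star ((Matrix.posSemidef_conjTranspose_mul_self M).1.eigenvectorUnitary : Matrix m m ℝ)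
      * ((Matrix.posSemidef_conjTranspose_mul_self M).1.eigenvectorUnitary : Matrix m m ℝ) = 1 :=
    Matrix.mem_unitaryGroup_iff'.mp (Matrix.posSemidef_conjTranspose_mul_self M).1.eigenvectorUnitary.2
  unfold traceNorm
  rw [Matrix.trace_mul_comm, ← Matrix.mul_assoc, hU1,
    Matrix.one_mul, Matrix.trace_diagonal]
  rfl

lemma traceNorm_nonneg (M : Matrix m m ℝ) : 0 ≤ traceNorm M := by
  rw [traceNorm_eq]
  exact Finset.sum_nonneg fun i _ => Real.sqrt_nonneg _

lemma trace_aux (B W U : Matrix m m ℝ) (f : m → ℝ) (hf : ∀ i, 0 ≤ f i) (hW : ‖W‖ ≤ 1)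
    (hU1 : star U * U = 1) (hU2 : U * star U = 1) :
    Matrix.trace (B * (W * (U * diagonal f * star U))) ≤ ‖B‖ * ∑ i, f i := by
  have hUn : ‖U‖ ≤ 1 := norm_le_one_of_star_mul_self_eq_one hU1
  have hUn' : ‖star U‖ ≤ 1 := norm_le_one_of_star_mul_self_eq_one (by rw [star_star]; exact hU2)
  have hZ : ‖star U * (B * W * U)‖ ≤ ‖B‖ := by
    have e1 := Matrix.l2_opNorm_mul (star U) (B * W * U)
    have e2 := Matrix.l2_opNorm_mul (B * W) U
    have e3 := Matrix.l2_opNorm_mul B W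
    nlinarith [norm_nonneg (star U), norm_nonneg (B * W * U), norm_nonneg (B * W),
      norm_nonneg U, norm_nonneg B, norm_nonneg W, norm_nonneg (star U * (B * W * U))]
  have key : Matrix.trace (B * (W * (U * diagonal f * star U)))
      = ∑ i, (star U * (B * W * U)) i i * f i := by
    rw [← Matrix.mul_assoc, ← Matrix.mul_assoc, ← Matrix.mul_assoc, Matrix.trace_mul_cycle]
    simp [Matrix.trace, Matrix.diag, Matrix.mul_diagonal]
  rw [key, Finset.mul_sum]
  apply Finset.sum_le_sum
  intro i _
  have h1 : (star U * (B * W * U)) i i ≤ ‖B‖ :=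
    le_trans (le_trans (le_abs_self _) (abs_entry_le_norm _ i i)) hZ
  exact mul_le_mul_of_nonneg_right h1 (hf i)

lemma trace_mul_le (B M : Matrix m m ℝ) : Matrix.trace (B * M) ≤ ‖B‖ * traceNorm M := by
  obtain ⟨W, hW, hMW, -⟩ := exists_polar M
  have hU1 : star ((Matrix.posSemidef_conjTranspose_mul_self M).1.eigenvectorUnitary : Matrix m m ℝ)
      * ((Matrix.posSemidef_conjTranspose_mul_self M).1.eigenvectorUnitary : Matrix m m ℝ) = 1 :=
    Matrix.mem_unitaryGroup_iff'.mp (Matrix.posSemidef_conjTranspose_mul_self M).1.eigenvectorUnitary.2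
  have hU2 : ((Matrix.posSemidef_conjTranspose_mul_self M).1.eigenvectorUnitary : Matrix m m ℝ)
      * star ((Matrix.posSemidef_conjTranspose_mul_self M).1.eigenvectorUnitary : Matrix m m ℝ) = 1 :=
    Matrix.mem_unitaryGroup_iff.mp (Matrix.posSemidef_conjTranspose_mul_self M).1.eigenvectorUnitary.2
  have h := trace_aux B W
    ((Matrix.posSemidef_conjTranspose_mul_self M).1.eigenvectorUnitary : Matrix m m ℝ)
    (fun i => Real.sqrt ((Matrix.posSemidef_conjTranspose_mul_self M).1.eigenvalues i))
    (fun i => Real.sqrt_nonneg _) hW hU1 hU2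
  rw [traceNorm_eq M]
  calc Matrix.trace (B * M)
      = Matrix.trace (B * (W * (((Matrix.posSemidef_conjTranspose_mul_self M).1.eigenvectorUnitary : Matrix m m ℝ)
          * diagonal (fun i => Real.sqrt ((Matrix.posSemidef_conjTranspose_mul_self M).1.eigenvalues i))
          * star ((Matrix.posSemidef_conjTranspose_mul_self M).1.eigenvectorUnitary : Matrix m m ℝ)))) := by
        rw [← sqrt_eq M, ← hMW]
    _ ≤ _ := h

lemma traceNorm_mul_le (A M B : Matrix m m ℝ) :
    traceNorm (A * M * B) ≤ ‖A‖ * traceNorm M * ‖B‖ := by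
  obtain ⟨W, hW, -, hS⟩ := exists_polar (A * M * B)
  have hWt : ‖Wᴴ‖ ≤ 1 := by rw [Matrix.l2_opNorm_conjTranspose]; exact hW
  have h0 : traceNorm (A * M * B) = Matrix.trace (Wᴴ * (A * M * B)) := by
    show Matrix.trace ((Matrix.posSemidef_conjTranspose_mul_self (A * M * B)).sqrt) = _
    rw [← hS]
  have h1 : Matrix.trace (Wᴴ * (A * M * B)) = Matrix.trace ((B * (Wᴴ * A)) * M) := by
    rw [← Matrix.mul_assoc, ← Matrix.mul_assoc, Matrix.trace_mul_comm, ← Matrix.mul_assoc]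
  have h2 := trace_mul_le (B * (Wᴴ * A)) M
  have h3 : ‖B * (Wᴴ * A)‖ ≤ ‖B‖ * ‖A‖ := by
    calc ‖B * (Wᴴ * A)‖ ≤ ‖B‖ * ‖Wᴴ * A‖ := Matrix.l2_opNorm_mul B (Wᴴ * A)
      _ ≤ ‖B‖ * (‖Wᴴ‖ * ‖A‖) :=
          mul_le_mul_of_nonneg_left (Matrix.l2_opNorm_mul Wᴴ A) (norm_nonneg B)
      _ ≤ ‖B‖ * (1 * ‖A‖) :=
          mul_le_mul_of_nonneg_left (mul_le_mul_of_nonneg_right hWt (norm_nonneg A))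
            (norm_nonneg B)
      _ = ‖B‖ * ‖A‖ := by ring
  have h4 := traceNorm_nonneg M
  have h5 := mul_le_mul_of_nonneg_right h3 h4
  nlinarith [h0, h1, h2, h5]

lemma traceNorm_sandwich_le {A B : Matrix m m ℝ} (hA : opNorm A ≤ 1) (hB : opNorm B ≤ 1)
    (M : Matrix m m ℝ) : traceNorm (A * M * Bᵀ) ≤ traceNorm M := by
  have h := traceNorm_mul_le A M Bᵀ
  have hBt : ‖Bᵀ‖ ≤ 1 := by
    rw [← Matrix.conjTranspose_eq_transpose_of_trivial, Matrix.l2_opNorm_conjTranspose]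
    exact hB
  rw [opNorm_eq_norm] at hA
  have h4 := traceNorm_nonneg M
  have : ‖A‖ * traceNorm M * ‖Bᵀ‖ ≤ traceNorm M := by
    calc ‖A‖ * traceNorm M * ‖Bᵀ‖ ≤ 1 * traceNorm M * ‖Bᵀ‖ :=
          mul_le_mul_of_nonneg_right (mul_le_mul_of_nonneg_right hA h4) (norm_nonneg Bᵀ)
      _ = traceNorm M * ‖Bᵀ‖ := by ring
      _ ≤ traceNorm M * 1 := mul_le_mul_of_nonneg_left hBt h4
      _ = traceNorm M := by ring
  linarith

lemma l1Norm_mulVec_le {k : Type*} [Fintype k] (A : Matrix k k ℝ) (hA : l1OpNorm A ≤ 1)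
    (v : k → ℝ) : l1Norm (A *ᵥ v) ≤ l1Norm v := by
  unfold l1Norm
  unfold l1OpNorm at hA
  calc ∑ i, |(A *ᵥ v) i| = ∑ i, |∑ j, A i j * v j| := by
        simp [Matrix.mulVec, dotProduct]
    _ ≤ ∑ i, ∑ j, |A i j * v j| :=
        Finset.sum_le_sum fun i _ => Finset.abs_sum_le_sum_abs _ _
    _ = ∑ j, (∑ i, |A i j|) * |v j| := by
        rw [Finset.sum_comm]
        simp [abs_mul, Finset.sum_mul]
    _ ≤ ∑ j, 1 * |v j| := by
        apply Finset.sum_le_sum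
        intro j _
        apply mul_le_mul_of_nonneg_right _ (abs_nonneg _)
        exact le_trans (le_ciSup (f := fun j => ∑ i, |A i j|)
          (Set.Finite.bddAbove (Set.finite_range _)) j) hA
    _ = ∑ j, |v j| := by simp

end Helpers

/-- Monotonicity of the continuous imaginarity measure `𝓘_c` under the free
superchannels of covariant-real form: `A = diag(A11,A22)`, `O = diag(O11,O22)`
with all operator norms `≤ 1` and `‖A22‖_{1→1} ≤ 1`, `Y = diag(Y11,Y22)`, and
displacement `d̄` with zero even part.  Then
`𝓘_c(A T Oᵀ, A N Aᵀ + Y, A d + d̄) ≤ 𝓘_c(T, N, d)`. -/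
theorem Ic_monotone (n : ℕ)
    (A11 A22 O11 O22 Y11 Y22 : Matrix (Fin n) (Fin n) ℝ)
    (hA11 : opNorm A11 ≤ 1) (hA22 : opNorm A22 ≤ 1)
    (hO11 : opNorm O11 ≤ 1) (hO22 : opNorm O22 ≤ 1)
    (hA22' : l1OpNorm A22 ≤ 1)
    (T N : Matrix (Fin n ⊕ Fin n) (Fin n ⊕ Fin n) ℝ)
    (d dbar : Fin n ⊕ Fin n → ℝ) (hdbar : ∀ i : Fin n, dbar (Sum.inr i) = 0) :
    Ic n (Matrix.fromBlocks A11 0 0 A22 * T * (Matrix.fromBlocks O11 0 0 O22)ᵀ)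
      (Matrix.fromBlocks A11 0 0 A22 * N * (Matrix.fromBlocks A11 0 0 A22)ᵀ +
        Matrix.fromBlocks Y11 0 0 Y22)
      (Matrix.fromBlocks A11 0 0 A22 *ᵥ d + dbar) ≤ Ic n T N d := by
  have hT : Matrix.fromBlocks A11 0 0 A22 * T * (Matrix.fromBlocks O11 0 0 O22)ᵀ =
      Matrix.fromBlocks (A11 * T.toBlocks₁₁ * O11ᵀ) (A11 * T.toBlocks₁₂ * O22ᵀ)
        (A22 * T.toBlocks₂₁ * O11ᵀ) (A22 * T.toBlocks₂₂ * O22ᵀ) := by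
    conv_lhs => rw [← Matrix.fromBlocks_toBlocks T]
    rw [Matrix.fromBlocks_transpose, Matrix.fromBlocks_multiply, Matrix.fromBlocks_multiply]
    simp only [Matrix.transpose_zero, Matrix.zero_mul, Matrix.mul_zero, add_zero, zero_add]
  have hN : Matrix.fromBlocks A11 0 0 A22 * N * (Matrix.fromBlocks A11 0 0 A22)ᵀ +
        Matrix.fromBlocks Y11 0 0 Y22 =
      Matrix.fromBlocks (A11 * N.toBlocks₁₁ * A11ᵀ + Y11) (A11 * N.toBlocks₁₂ * A22ᵀ)
        (A22 * N.toBlocks₂₁ * A11ᵀ) (A22 * N.toBlocks₂₂ * A22ᵀ + Y22) := by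
    conv_lhs => rw [← Matrix.fromBlocks_toBlocks N]
    rw [Matrix.fromBlocks_transpose, Matrix.fromBlocks_multiply, Matrix.fromBlocks_multiply,
      Matrix.fromBlocks_add]
    simp only [Matrix.transpose_zero, Matrix.zero_mul, Matrix.mul_zero, add_zero, zero_add]
  have hd : (fun i => (Matrix.fromBlocks A11 0 0 A22 *ᵥ d + dbar) (Sum.inr i)) =
      A22 *ᵥ (fun i => d (Sum.inr i)) := by
    funext i
    simp [Matrix.mulVec, dotProduct, Fintype.sum_sum_type, hdbar i]
  unfold Ic
  rw [hT, hN, hd]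
  simp only [Matrix.toBlocks_fromBlocks₂₁, Matrix.toBlocks_fromBlocks₁₂,
    Matrix.toBlocks_fromBlocks₂₂]
  have h21 := traceNorm_sandwich_le hA22 hO11 T.toBlocks₂₁
  have h12 := traceNorm_sandwich_le hA11 hO22 T.toBlocks₁₂
  have h22 := traceNorm_sandwich_le hA22 hO22 T.toBlocks₂₂
  have hn12 := traceNorm_sandwich_le hA11 hA22 N.toBlocks₁₂
  have hprod : traceNorm (A11 * T.toBlocks₁₂ * O22ᵀ) * traceNorm (A22 * T.toBlocks₂₂ * O22ᵀ) ≤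
      traceNorm T.toBlocks₁₂ * traceNorm T.toBlocks₂₂ :=
    mul_le_mul h12 h22 (traceNorm_nonneg _) (traceNorm_nonneg _)
  have hl1 := l1Norm_mulVec_le A22 hA22' (fun i => d (Sum.inr i))
  exact add_le_add (add_le_add (add_le_add h21 hprod) hn12) hl1
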